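/- Let K be a field of characteristic zero, A = K[x] with |x| = 2n even and zero differential, and let P = A^{⊗2} ⊗ ∧(sx) be the path model with d(sx) = 1⊗x − x⊗1. Define the A^{⊗2}-linear map ψ from A ⊗_{A^{⊗2}} (P ⊗_A (A⊗∧s^kx)) into P ⊗_{A^{⊗2}} (P ⊗_A (A⊗∧s^kx)) by ψ(x⊗1) = 1⊗(x⊗1), ψ(1⊗sx) = 1⊗(sx⊗1) − sx⊗1, ψ(1⊗s^kx) = 1⊗(1⊗s^kx). Then ψ extends to a dga section of the quasi-isomorphism ε̄⊗id induced by ε̄: P → A. -/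

import Mathlib

noncomputable section
namespace Brane

/-- The monomial in a generator family indexed by a list. -/
def mon {A G : Type} [Ring A] (gen : G → A) (l : List G) : A := (l.map gen).prod

/-- The degree-`m` component: the `K`-span of monomials of total degree `m`. -/
def grading (K : Type) {A G : Type} [Field K] [Ring A] [Algebra K A]
    (gen : G → A) (dg : G → ℤ) (m : ℤ) : Submodule K A :=
  Submodule.span K {a : A | ∃ l : List G, (l.map dg).sum = m ∧ a = mon gen l}

/-- Graded commutativity on generators (Koszul signs). -/
def GradedComm (K : Type) {A G : Type} [Field K] [Ring A] [Algebra K A]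
    (gen : G → A) (dg : G → ℤ) : Prop :=
  ∀ i j, gen i * gen j = ((-1 : K) ^ (dg i * dg j)) • (gen j * gen i)

/-- `A` is the free graded-commutative algebra on the generators: the reduced sorted
monomials (odd generators appearing at most once) form a `K`-basis. -/
def IsFreeGCAOn (K : Type) {A G : Type} [Field K] [Ring A] [Algebra K A] [LinearOrder G]
    (gen : G → A) (dg : G → ℤ) : Prop :=
  ∃ b : Module.Basis {l : List G // l.Pairwise (· ≤ ·) ∧ ∀ g, Odd (dg g) → l.count g ≤ 1} K A,
    ∀ l, b l = mon gen l.1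

/-- A graded `K`-linear derivation of degree `r` (Koszul sign rule). -/
def IsGradedDer (K : Type) {A G : Type} [Field K] [Ring A] [Algebra K A]
    (gen : G → A) (dg : G → ℤ) (r : ℤ) (D : A →ₗ[K] A) : Prop :=
  (∀ (i : ℤ) (a : A), a ∈ grading K gen dg i → D a ∈ grading K gen dg (i + r)) ∧
  (∀ (i : ℤ) (a b : A), a ∈ grading K gen dg i →
    D (a * b) = D a * b + ((-1 : K) ^ (r * i)) • (a * D b))

/-- A differential: a graded derivation of degree `1` squaring to zero. -/
def IsDifferential (K : Type) {A G : Type} [Field K] [Ring A] [Algebra K A]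
    (gen : G → A) (dg : G → ℤ) (D : A →ₗ[K] A) : Prop :=
  IsGradedDer K gen dg 1 D ∧ ∀ a, D (D a) = 0

/-- The Sullivan (nilpotence) condition. -/
def SullivanCond (K : Type) {A G : Type} [Field K] [Ring A] [Algebra K A]
    (gen : G → A) (D : A →ₗ[K] A) : Prop :=
  ∃ w : G → ℕ, ∀ g, D (gen g) ∈ Algebra.adjoin K (gen '' {g' | w g' < w g})

/-- Decomposable elements (span of monomials of length at least two). -/
def decomposables (K : Type) {A G : Type} [Field K] [Ring A] [Algebra K A]
    (gen : G → A) : Submodule K A :=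
  Submodule.span K {a : A | ∃ l : List G, 2 ≤ l.length ∧ a = mon gen l}


section Aux

variable {K A B G : Type} [Field K] [Ring A] [Algebra K A] [Ring B] [Algebra K B]

lemma mon_nil (gen : G → A) : mon gen [] = 1 := by simp [mon]

lemma mon_cons (gen : G → A) (g : G) (l : List G) :
    mon gen (g :: l) = gen g * mon gen l := by simp [mon]

lemma mon_append (gen : G → A) (l1 l2 : List G) :
    mon gen (l1 ++ l2) = mon gen l1 * mon gen l2 := by simp [mon]

lemma pairwise_commute_map {gen : G → A} (hcomm : ∀ i j, gen i * gen j = gen j * gen i)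
    (l : List G) : (l.map gen).Pairwise Commute := by
  induction l with
  | nil => simp
  | cons a t ih =>
    simp only [List.map_cons, List.pairwise_cons]
    refine ⟨fun x hx => ?_, ih⟩
    obtain ⟨g, -, rfl⟩ := List.mem_map.1 hx
    exact hcomm a g

lemma mon_perm {gen : G → A} (hcomm : ∀ i j, gen i * gen j = gen j * gen i)
    {l1 l2 : List G} (h : l1.Perm l2) : mon gen l1 = mon gen l2 :=
  List.Perm.prod_eq' (h.map gen) (pairwise_commute_map hcomm l1)

lemma mon_eq_zero_of_dup [DecidableEq G] {gen : G → A}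
    (hcomm : ∀ i j, gen i * gen j = gen j * gen i) {g : G} (hg : gen g * gen g = 0)
    {l : List G} (h2 : 2 ≤ l.count g) : mon gen l = 0 := by
  have h1 : g ∈ l := List.count_pos_iff.mp (by omega)
  have h2' : g ∈ l.erase g := by
    refine List.count_pos_iff.mp ?_
    rw [List.count_erase_self]
    omega
  have hperm : l.Perm (g :: g :: (l.erase g).erase g) :=
    (List.perm_cons_erase h1).trans ((List.perm_cons_erase h2').cons g)
  rw [mon_perm hcomm hperm, mon_cons, mon_cons, ← mul_assoc, hg, zero_mul]

lemma gc_comm {gen : G → A} {dg : G → ℤ} (hc : GradedComm K gen dg) {i j : G}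
    (h : Even (dg i) ∨ Even (dg j)) : gen i * gen j = gen j * gen i := by
  have he : Even (dg i * dg j) := by
    rcases h with h | h
    · exact h.mul_right _
    · exact h.mul_left _
  rw [hc i j, he.neg_one_zpow, one_smul]

lemma gc_anticomm {gen : G → A} {dg : G → ℤ} (hc : GradedComm K gen dg) {i j : G}
    (hi : Odd (dg i)) (hj : Odd (dg j)) : gen i * gen j = -(gen j * gen i) := by
  rw [hc i j, (hi.mul hj).neg_one_zpow, neg_one_smul]

lemma gc_sq_zero [CharZero K] {gen : G → A} {dg : G → ℤ} (hc : GradedComm K gen dg) {g : G}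
    (hg : Odd (dg g)) : gen g * gen g = 0 := by
  have h := gc_anticomm hc hg hg
  have h2 : (2 : K) • (gen g * gen g) = 0 := by
    rw [two_smul]
    nth_rewrite 1 [h]
    exact neg_add_cancel _
  calc gen g * gen g = (2 : K)⁻¹ • ((2 : K) • (gen g * gen g)) :=
        (inv_smul_smul₀ two_ne_zero _).symm
    _ = 0 := by rw [h2, smul_zero]

lemma der_one {gen : G → A} {dg : G → ℤ} {r : ℤ} {D : A →ₗ[K] A}
    (hD : IsGradedDer K gen dg r D) : D 1 = 0 := by
  have h1 : (1 : A) ∈ grading K gen dg 0 :=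
    Submodule.subset_span ⟨[], by simp, by simp [mon]⟩
  have h := hD.2 0 1 1 h1
  simp only [mul_one, one_mul, mul_zero, zpow_zero, one_smul] at h
  exact left_eq_add.mp h

theorem freeGCA_lift [LinearOrder G] {gen : G → A} {dg : G → ℤ}
    (hfree : IsFreeGCAOn K gen dg)
    (hcomm : ∀ i j, gen i * gen j = gen j * gen i)
    (hsq : ∀ g, Odd (dg g) → gen g * gen g = 0)
    (t : G → B)
    (tcomm : ∀ i j, t i * t j = t j * t i)
    (tsq : ∀ g, Odd (dg g) → t g * t g = 0) :
    ∃ φ : A →ₐ[K] B, ∀ l : List G, φ (mon gen l) = mon t l := by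
  classical
  obtain ⟨b, hb⟩ := hfree
  set f : A →ₗ[K] B := b.constr K (fun l => mon t l.1) with hf
  have key : ∀ m : List G, f (mon gen m) = mon t m := by
    intro m
    set m' := m.insertionSort (· ≤ ·) with hm'
    have hperm : m.Perm m' := (List.perm_insertionSort _ m).symm
    have hsorted : m'.Pairwise (· ≤ ·) := List.pairwise_insertionSort _ m
    by_cases hred : ∀ g, Odd (dg g) → m'.count g ≤ 1
    · have hcb := b.constr_basis K (fun l => mon t l.1) ⟨m', hsorted, hred⟩
      rw [hb] at hcb
      rw [mon_perm hcomm hperm, mon_perm tcomm hperm]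
      exact hcb
    · push_neg at hred
      obtain ⟨g, hgodd, hgc⟩ := hred
      have hc2 : 2 ≤ m.count g := by
        rw [hperm.count_eq]
        omega
      rw [mon_eq_zero_of_dup hcomm (hsq g hgodd) hc2,
          mon_eq_zero_of_dup tcomm (tsq g hgodd) hc2, map_zero]
  have hone : f 1 = 1 := by simpa [mon] using key []
  have hmul : ∀ a c : A, f (a * c) = f a * f c := by
    have H : (LinearMap.mul K A).compr₂ f = (LinearMap.mul K B).compl₁₂ f f := by
      refine b.ext fun l1 => b.ext fun l2 => ?_
      simp only [LinearMap.compr₂_apply, LinearMap.mul_apply', LinearMap.compl₁₂_apply, hb]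
      rw [← mon_append, key, key, key, mon_append]
    intro a c
    have h := LinearMap.congr_fun (LinearMap.congr_fun H a) c
    simpa using h
  refine ⟨AlgHom.ofLinearMap f hone hmul, fun l => ?_⟩
  simpa using key l

end Aux

/-- Let `K` be a field of characteristic zero, `A = K[x]` with
`|x| = 2n` even and zero differential, and `P = A^{⊗2} ⊗ ∧(sx)` the path model with
`d(sx) = 1⊗x − x⊗1`.  Define `ψ` from `C1 = A ⊗_{A^{⊗2}} (P ⊗_A (A ⊗ ∧s^kx))` (which has
zero differential) to `C2 = P ⊗_{A^{⊗2}} (P ⊗_A (A ⊗ ∧s^kx))` by `ψ(x⊗1) = 1⊗(x⊗1)`,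
`ψ(1⊗sx) = 1⊗(sx⊗1) − sx⊗1`, `ψ(1⊗s^kx) = 1⊗(1⊗s^kx)`.  Then `ψ` extends to a dga
section of the quasi-isomorphism `ε̄ ⊗ id` induced by `ε̄ : P → A`. -/
theorem section_psi_exists_evenEM
    (K C1 C2 : Type) [Field K] [CharZero K]
    [Ring C1] [Algebra K C1] [Ring C2] [Algebra K C2]
    [LinearOrder (Fin 2 ⊕ Fin 1)] [LinearOrder (Fin 3 ⊕ Fin 2)]
    (n k : ℕ) (hk : 0 < k) (hkeven : Even k) (hnk : k < 2 * n)
    -- C1: generators x, s^kx (even); sx (odd); zero differential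
    (c1 : Fin 2 ⊕ Fin 1 → C1)
    (hC1free : IsFreeGCAOn K c1 (Sum.elim ![(2 * n : ℤ), 2 * n - k] ![2 * n - 1]))
    (hC1comm : GradedComm K c1 (Sum.elim ![(2 * n : ℤ), 2 * n - k] ![2 * n - 1]))
    -- C2: generators x₁, x₂, s^kx (even); sx_L, sx_R (odd)
    (c2 : Fin 3 ⊕ Fin 2 → C2)
    (hC2free : IsFreeGCAOn K c2
      (Sum.elim ![(2 * n : ℤ), 2 * n, 2 * n - k] ![2 * n - 1, 2 * n - 1]))
    (hC2comm : GradedComm K c2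
      (Sum.elim ![(2 * n : ℤ), 2 * n, 2 * n - k] ![2 * n - 1, 2 * n - 1]))
    -- the differential of C2: d(sx_L) = d(sx_R) = x₂ − x₁, zero on the other generators
    (dC2 : C2 →ₗ[K] C2)
    (hdC2 : IsDifferential K c2
      (Sum.elim ![(2 * n : ℤ), 2 * n, 2 * n - k] ![2 * n - 1, 2 * n - 1]) dC2)
    (hdC2a : ∀ i : Fin 3, dC2 (c2 (Sum.inl i)) = 0)
    (hdC2b : ∀ i : Fin 2, dC2 (c2 (Sum.inr i)) = c2 (Sum.inl 1) - c2 (Sum.inl 0))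
    -- the quasi-isomorphism ε̄ ⊗ id : C2 → C1: x₁, x₂ ↦ x, s^kx ↦ s^kx, sx_L ↦ 0, sx_R ↦ sx
    (Eb : C2 →ₐ[K] C1)
    (hEb1 : Eb (c2 (Sum.inl 0)) = c1 (Sum.inl 0)) (hEb2 : Eb (c2 (Sum.inl 1)) = c1 (Sum.inl 0))
    (hEb3 : Eb (c2 (Sum.inl 2)) = c1 (Sum.inl 1))
    (hEb4 : Eb (c2 (Sum.inr 0)) = 0) (hEb5 : Eb (c2 (Sum.inr 1)) = c1 (Sum.inr 0)) :
    -- ψ extends to a dga section of ε̄ ⊗ id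
    ∃ ψ : C1 →ₐ[K] C2,
      ψ (c1 (Sum.inl 0)) = c2 (Sum.inl 0) ∧
      ψ (c1 (Sum.inl 1)) = c2 (Sum.inl 2) ∧
      ψ (c1 (Sum.inr 0)) = c2 (Sum.inr 1) - c2 (Sum.inr 0) ∧
      (∀ z : C1, dC2 (ψ z) = 0) ∧
      (∀ z : C1, Eb (ψ z) = z) := by
  classical
  have hEn : Even ((2 * n : ℤ)) := ⟨n, by ring⟩
  have hEnk : Even ((2 * n - k : ℤ)) := by
    obtain ⟨m, hm⟩ := hkeven
    exact ⟨(n : ℤ) - m, by push_cast [hm]; ring⟩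
  have hOn : Odd ((2 * n - 1 : ℤ)) := Even.sub_odd hEn odd_one
  -- degree facts
  have hd1 : ∀ i : Fin 2,
      Even ((Sum.elim ![(2 * n : ℤ), 2 * n - k] ![2 * n - 1]) (Sum.inl i)) := by
    intro i
    fin_cases i
    · simpa using hEn
    · simpa using hEnk
  have hd1' : ∀ i : Fin 1,
      Odd ((Sum.elim ![(2 * n : ℤ), 2 * n - k] ![2 * n - 1]) (Sum.inr i)) := by
    intro i
    fin_cases i
    simpa using hOn
  have hd2 : ∀ i : Fin 3,
      Even ((Sum.elim ![(2 * n : ℤ), 2 * n, 2 * n - k] ![2 * n - 1, 2 * n - 1]) (Sum.inl i)) := by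
    intro i
    fin_cases i
    · simpa using hEn
    · simpa using hEn
    · simpa using hEnk
  have hd2' : ∀ i : Fin 2,
      Odd ((Sum.elim ![(2 * n : ℤ), 2 * n, 2 * n - k] ![2 * n - 1, 2 * n - 1]) (Sum.inr i)) := by
    intro i
    fin_cases i
    · simpa using hOn
    · simpa using hOn
  -- commutativity of C1 generators
  have hc1comm : ∀ i j, c1 i * c1 j = c1 j * c1 i := by
    rintro (i | i) (j | j)
    · exact gc_comm hC1comm (Or.inl (hd1 i))
    · exact gc_comm hC1comm (Or.inl (hd1 i))
    · exact gc_comm hC1comm (Or.inr (hd1 j))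
    · rw [Subsingleton.elim i j]
  -- target generators
  set t : Fin 2 ⊕ Fin 1 → C2 :=
    Sum.elim ![c2 (Sum.inl 0), c2 (Sum.inl 2)] ![c2 (Sum.inr 1) - c2 (Sum.inr 0)] with ht
  have t0 : t (Sum.inl 0) = c2 (Sum.inl 0) := rfl
  have t1 : t (Sum.inl 1) = c2 (Sum.inl 2) := rfl
  have t2 : ∀ i : Fin 1, t (Sum.inr i) = c2 (Sum.inr 1) - c2 (Sum.inr 0) := by
    intro i; fin_cases i; rfl
  have hx0 : ∀ (i : Fin 3) (j : Fin 3 ⊕ Fin 2),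
      c2 (Sum.inl i) * c2 j = c2 j * c2 (Sum.inl i) :=
    fun i j => gc_comm hC2comm (Or.inl (hd2 i))
  have hsub : ∀ a : Fin 3,
      c2 (Sum.inl a) * (c2 (Sum.inr 1) - c2 (Sum.inr 0))
        = (c2 (Sum.inr 1) - c2 (Sum.inr 0)) * c2 (Sum.inl a) := by
    intro a
    rw [mul_sub, sub_mul, hx0 a (Sum.inr 1), hx0 a (Sum.inr 0)]
  have tcomm : ∀ i j, t i * t j = t j * t i := by
    rintro (i | i) (j | j)
    · fin_cases i <;> fin_cases j <;> simp only [t0, t1] <;> exact hx0 _ _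
    · rw [t2 j]
      fin_cases i <;> simp only [t0, t1] <;> exact hsub _
    · rw [t2 i]
      fin_cases j <;> simp only [t0, t1] <;> exact (hsub _).symm
    · rw [Subsingleton.elim i j]
  have hsqL : c2 (Sum.inr 0) * c2 (Sum.inr 0) = 0 := gc_sq_zero hC2comm (hd2' 0)
  have hsqR : c2 (Sum.inr 1) * c2 (Sum.inr 1) = 0 := gc_sq_zero hC2comm (hd2' 1)
  have hanti : c2 (Sum.inr 0) * c2 (Sum.inr 1) = -(c2 (Sum.inr 1) * c2 (Sum.inr 0)) :=
    gc_anticomm hC2comm (hd2' 0) (hd2' 1)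
  have tsq : ∀ g, Odd ((Sum.elim ![(2 * n : ℤ), 2 * n - k] ![2 * n - 1]) g) →
      t g * t g = 0 := by
    rintro (g | g) hodd
    · exact absurd hodd (Int.not_odd_iff_even.mpr (hd1 g))
    · rw [t2 g, sub_mul, mul_sub, mul_sub, hsqL, hsqR, hanti]
      abel
  obtain ⟨ψ, hψ⟩ := freeGCA_lift hC1free hc1comm
    (fun g h => gc_sq_zero hC1comm h) t tcomm tsq
  have hgen : ∀ g, ψ (c1 g) = t g := by
    intro g
    simpa [mon] using hψ [g]
  -- the differential kills everything in the image
  have hdt : ∀ g, dC2 (t g) = 0 := by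
    rintro (g | g)
    · fin_cases g
      · exact hdC2a 0
      · exact hdC2a 2
    · rw [t2 g, map_sub, hdC2b 0, hdC2b 1, sub_self]
  have hmemt : ∀ g, ∃ m, t g ∈
      grading K c2 (Sum.elim ![(2 * n : ℤ), 2 * n, 2 * n - k] ![2 * n - 1, 2 * n - 1]) m := by
    rintro (g | g)
    · fin_cases g
      · exact ⟨2 * n, Submodule.subset_span ⟨[Sum.inl 0], by simp, by simp [mon, t0]⟩⟩
      · exact ⟨2 * n - k, Submodule.subset_span ⟨[Sum.inl 2], by simp, by simp [mon, t1]⟩⟩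
    · refine ⟨2 * n - 1, ?_⟩
      rw [t2 g]
      exact sub_mem
        (Submodule.subset_span ⟨[Sum.inr 1], by simp, by simp [mon]⟩)
        (Submodule.subset_span ⟨[Sum.inr 0], by simp, by simp [mon]⟩)
  have hdmon : ∀ l : List (Fin 2 ⊕ Fin 1), dC2 (mon t l) = 0 := by
    intro l
    induction l with
    | nil => rw [mon_nil]; exact der_one hdC2.1
    | cons g tl ih =>
      obtain ⟨m, hm⟩ := hmemt g
      rw [mon_cons, hdC2.1.2 m (t g) (mon t tl) hm, hdt g, zero_mul, ih, mul_zero,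
        smul_zero, add_zero]
  have hd0 : ∀ z : C1, dC2 (ψ z) = 0 := by
    have H : dC2.comp ψ.toLinearMap = 0 := by
      obtain ⟨b, hb⟩ := hC1free
      refine b.ext fun l => ?_
      simp only [LinearMap.comp_apply, AlgHom.toLinearMap_apply, LinearMap.zero_apply, hb]
      rw [hψ, hdmon]
    intro z
    simpa using LinearMap.congr_fun H z
  -- section property
  have hEt : ∀ g, Eb (t g) = c1 g := by
    rintro (g | g)
    · fin_cases g
      · exact hEb1
      · exact hEb3
    · obtain rfl : g = 0 := Subsingleton.elim g 0
      rw [t2 0, map_sub, hEb5, hEb4, sub_zero]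
  have hEmon : ∀ l : List (Fin 2 ⊕ Fin 1), Eb (mon t l) = mon c1 l := by
    intro l
    induction l with
    | nil => simp [mon]
    | cons g tl ih => rw [mon_cons, map_mul, hEt, ih, mon_cons]
  have hsec : ∀ z : C1, Eb (ψ z) = z := by
    have H : Eb.toLinearMap.comp ψ.toLinearMap = LinearMap.id := by
      obtain ⟨b, hb⟩ := hC1free
      refine b.ext fun l => ?_
      simp only [LinearMap.comp_apply, AlgHom.toLinearMap_apply, LinearMap.id_apply, hb]
      rw [hψ, hEmon]
    intro z
    simpa using LinearMap.congr_fun H z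
  exact ⟨ψ, (hgen _).trans t0, (hgen _).trans t1, (hgen _).trans (t2 0), hd0, hsec⟩


end Brane
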